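/- Fix a nonempty finite index set of cardinality n and let M be the algebra of n×n complex matrices with normalized trace τ(A) = Tr(A)/n. Then log n is the greatest element of the set of real numbers of the form ∑_{i=1}^m (η(τ(x_i)) − τ(η(x_i))), taken over all finite families x_1, …, x_m of positive semidefinite matrices in M with ∑_{i=1}^m x_i = 1 (the identity matrix). That is, every such sum is ≤ log n, and some such family attains the value log n. -/

import Mathlib

open scoped ComplexOrder

/-- The entropy function `η(t) = −t log t` (with `η(0) = 0`). -/
noncomputable def eta (t : ℝ) : ℝ := -(t * Real.log t)

/-- The normalized trace `τ(A) = Tr(A)/n`, as a real number. -/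
noncomputable def tauR {n : Type*} [Fintype n] [DecidableEq n] (A : Matrix n n ℂ) : ℝ :=
  (A.trace).re / (Fintype.card n)

/-- `τ(η(A))` for a Hermitian matrix `A`: `(1/n)·∑ η(λ_l)` over the eigenvalues of `A`
(junk value `0` for non-Hermitian matrices). -/
noncomputable def tauEta {n : Type*} [Fintype n] [DecidableEq n] (A : Matrix n n ℂ) : ℝ :=
  if hA : A.IsHermitian then (∑ i, eta (hA.eigenvalues i)) / (Fintype.card n) else 0

lemma eta_zero : eta 0 = 0 := by simp [eta]

lemma eta_one : eta 1 = 0 := by simp [eta]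

/-- Subadditivity of `η` over a finite sum of nonnegative reals. -/
lemma eta_sum_le {ι : Type*} (s : Finset ι) (f : ι → ℝ) (hf : ∀ i ∈ s, 0 ≤ f i) :
    eta (∑ i ∈ s, f i) ≤ ∑ i ∈ s, eta (f i) := by
  have ht : eta (∑ i ∈ s, f i) = ∑ i ∈ s, -(f i * Real.log (∑ j ∈ s, f j)) := by
    simp only [eta]
    rw [Finset.sum_mul]
    exact (Finset.sum_neg_distrib _).symm
  rw [ht]
  apply Finset.sum_le_sum
  intro i hi
  rcases eq_or_lt_of_le (hf i hi) with h | h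
  · simp [eta, ← h]
  · have hle : f i ≤ ∑ j ∈ s, f j := Finset.single_le_sum hf hi
    have hlog := Real.log_le_log h hle
    have := (hf i hi)
    rw [eta]
    nlinarith

/-- The trace of a Hermitian matrix is the sum of its eigenvalues. -/
lemma trace_eq_sum_eigenvalues {n : Type*} [Fintype n] [DecidableEq n]
    {A : Matrix n n ℂ} (hA : A.IsHermitian) :
    A.trace = ∑ i, (hA.eigenvalues i : ℂ) := by
  exact hA.trace_eq_sum_eigenvalues

lemma tauR_eq_sum {n : Type*} [Fintype n] [DecidableEq n]
    {A : Matrix n n ℂ} (hA : A.IsHermitian) :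
    tauR A = (∑ i, hA.eigenvalues i) / (Fintype.card n) := by
  rw [tauR, trace_eq_sum_eigenvalues hA]
  norm_num [Complex.re_sum]

/-- Rescaling identity for `η`. -/
lemma eta_div_nat {N : ℕ} (hN : 0 < N) {l : ℝ} (hl : 0 ≤ l) :
    eta l / N = eta (l / N) - (l / N) * Real.log N := by
  rcases eq_or_lt_of_le hl with h | h
  · simp [eta, ← h]
  · have hN2 : (0:ℝ) < N := by exact_mod_cast hN
    simp only [eta]
    rw [Real.log_div (ne_of_gt h) (ne_of_gt hN2)]
    field_simp
    ring

/-- Eigenvalues of a Hermitian idempotent lie in `{0, 1}`. -/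
lemma eigenvalues_of_idem {n : Type*} [Fintype n] [DecidableEq n]
    {A : Matrix n n ℂ} (hA : A.IsHermitian) (h : A * A = A) (i : n) :
    hA.eigenvalues i = 0 ∨ hA.eigenvalues i = 1 := by
  set μ := hA.eigenvalues i with hμ
  have hv := hA.mulVec_eigenvectorBasis i
  set v := ⇑(hA.eigenvectorBasis i) with hvdef
  have hv2 : A.mulVec (A.mulVec v) = μ • (μ • v) := by rw [hv, Matrix.mulVec_smul, hv]
  rw [Matrix.mulVec_mulVec, h, hv, smul_smul] at hv2
  have h3 : (μ - μ * μ) • v = 0 := by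
    rw [sub_smul, hv2, sub_self]
  have hvne : v ≠ 0 := by
    intro hc
    apply hA.eigenvectorBasis.orthonormal.ne_zero i
    ext j
    exact congrFun hc j
  rcases smul_eq_zero.mp h3 with h4 | h4
  · have h5 : μ * (1 - μ) = 0 := by linear_combination h4
    rcases mul_eq_zero.mp h5 with h6 | h6
    · exact Or.inl h6
    · exact Or.inr (by linarith)
  · exact absurd h4 hvne

/-- Property (D) of Theorem 2.5 for the full matrix algebra: `log n` is the greatest value of
`∑_i (η(τ(x_i)) − τ(η(x_i)))` over all finite partitions of unity `(x_i)` by positive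
semidefinite matrices. -/
theorem entropy_of_matrix_algebra {n : Type*} [Fintype n] [DecidableEq n] [Nonempty n] :
    IsGreatest
      {s : ℝ | ∃ (m : ℕ) (x : Fin m → Matrix n n ℂ),
        (∀ i, (x i).PosSemidef) ∧ (∑ i, x i) = 1 ∧
        s = ∑ i, (eta (tauR (x i)) - tauEta (x i))}
      (Real.log (Fintype.card n)) := by
  set N := Fintype.card n with hNdef
  have hN : 0 < N := Fintype.card_pos
  have hN' : (0:ℝ) < N := by exact_mod_cast hN
  constructor
  · -- membership: the family of minimal (diagonal) projections attains log n
    set e : Fin N ≃ n := (Fintype.equivFin n).symm with he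
    refine ⟨N, fun i => Matrix.diagonal (fun j => if e.symm j = i then (1:ℂ) else 0), ?_, ?_, ?_⟩
    · intro i
      refine Matrix.posSemidef_diagonal_iff.mpr ?_
      intro j
      split_ifs
      · exact zero_le_one
      · exact le_refl 0
    · ext j k
      by_cases hjk : j = k
      · subst hjk
        simp [Matrix.sum_apply, Matrix.one_apply, Finset.sum_ite_eq]
      · simp [Matrix.sum_apply, Matrix.one_apply, hjk, Matrix.diagonal_apply_ne _ hjk]
    · -- the value is log N
      have hpsd : ∀ i : Fin N,
          (Matrix.diagonal (fun j => if e.symm j = i then (1:ℂ) else 0)).PosSemidef := by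
        intro i
        refine Matrix.posSemidef_diagonal_iff.mpr ?_
        intro j
        split_ifs
        · exact zero_le_one
        · exact le_refl 0
      have hval : ∀ i : Fin N,
          eta (tauR (Matrix.diagonal (fun j => if e.symm j = i then (1:ℂ) else 0)))
            - tauEta (Matrix.diagonal (fun j => if e.symm j = i then (1:ℂ) else 0))
          = Real.log N / N := by
        intro i
        have hherm := (hpsd i).1
        have htr : tauR (Matrix.diagonal (fun j => if e.symm j = i then (1:ℂ) else 0))
            = 1 / N := by
          rw [tauR, Matrix.trace_diagonal]
          have : ∑ j, (if e.symm j = i then (1:ℂ) else 0) = 1 := by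
            simp [Equiv.symm_apply_eq, Finset.sum_ite_eq']
          rw [this]
          simp [hNdef]
        have hidem : (Matrix.diagonal (fun j => if e.symm j = i then (1:ℂ) else 0))
            * (Matrix.diagonal (fun j => if e.symm j = i then (1:ℂ) else 0))
            = Matrix.diagonal (fun j => if e.symm j = i then (1:ℂ) else 0) := by
          rw [Matrix.diagonal_mul_diagonal]
          have hfun : (fun j => (if e.symm j = i then (1:ℂ) else 0) * if e.symm j = i then 1 else 0)
              = fun j => if e.symm j = i then (1:ℂ) else 0 := by
            funext j
            split_ifs <;> simp
          rw [hfun]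
        have hte : tauEta (Matrix.diagonal (fun j => if e.symm j = i then (1:ℂ) else 0)) = 0 := by
          rw [tauEta, dif_pos hherm]
          have : ∀ j, eta (hherm.eigenvalues j) = 0 := by
            intro j
            rcases eigenvalues_of_idem hherm hidem j with h | h <;>
              simp [h, eta_zero, eta_one]
          simp [this]
        rw [htr, hte, sub_zero]
        rw [eta, one_div, Real.log_inv]
        ring
      rw [Finset.sum_congr rfl (fun i _ => hval i)]
      rw [Finset.sum_const, Finset.card_univ, Fintype.card_fin, nsmul_eq_mul]
      field_simp
  · -- upper bound
    rintro s ⟨m, x, hpos, hsum, rfl⟩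
    have hherm : ∀ i, (x i).IsHermitian := fun i => (hpos i).1
    -- per-element bound
    have key : ∀ i, eta (tauR (x i)) - tauEta (x i) ≤ tauR (x i) * Real.log N := by
      intro i
      have hEig : ∀ l, 0 ≤ (hherm i).eigenvalues l := fun l => (hpos i).eigenvalues_nonneg l
      have htR : tauR (x i) = ∑ l, (hherm i).eigenvalues l / N := by
        rw [tauR_eq_sum (hherm i), Finset.sum_div]
      have htE : tauEta (x i)
          = ∑ l, (eta ((hherm i).eigenvalues l / N)
              - ((hherm i).eigenvalues l / N) * Real.log N) := by
        rw [tauEta, dif_pos (hherm i), Finset.sum_div]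
        exact Finset.sum_congr rfl (fun l _ => eta_div_nat hN (hEig l))
      have hsub : eta (∑ l, (hherm i).eigenvalues l / N)
          ≤ ∑ l, eta ((hherm i).eigenvalues l / N) :=
        eta_sum_le _ _ (fun l _ => div_nonneg (hEig l) (le_of_lt hN'))
      rw [htR, htE, Finset.sum_sub_distrib, ← Finset.sum_mul]
      have := hsub
      linarith
    calc ∑ i, (eta (tauR (x i)) - tauEta (x i))
        ≤ ∑ i, tauR (x i) * Real.log N := Finset.sum_le_sum (fun i _ => key i)
      _ = (∑ i, tauR (x i)) * Real.log N := by rw [Finset.sum_mul]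
      _ = Real.log N := by
          have hone : ∑ i, tauR (x i) = 1 := by
            have htr : (∑ i, x i).trace = ∑ i, (x i).trace := Matrix.trace_sum _ _
            rw [hsum, Matrix.trace_one] at htr
            have h1 : ∑ i, tauR (x i) = ((∑ i, (x i).trace).re) / N := by
              simp only [tauR]
              rw [← Finset.sum_div, Complex.re_sum, hNdef]
            rw [h1, ← htr]
            have h2 : ((Fintype.card n : ℂ)).re = (N : ℝ) := by simp [hNdef]
            rw [h2, div_self (ne_of_gt hN')]
          rw [hone, one_mul]
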